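/- arXiv:1303.0149 — 2 statements merged into one kernel-verified Lean document; each statement's English description precedes it below -/
import Mathlib

section
/- Let p ≥ 0 and q ≥ 1 be integers and n = p+q+2. Let u ∈ ℂ^p, v ∈ ℂ^q be row vectors, w ∈ ℂ with conj(w) = -w, and t ∈ ℝ. Let x₀ = (0,…,0,1)ᵀ ∈ ℂ^n. Then the vector exp(X_t)·exp(N_{u,v,w})·x₀ (matrix-vector multiplication) has first entry sinh t + (1/2)e^t(|u|² - |v|²) + e^t w, its next p entries are conj(u₁),…,conj(u_p), its next q entries are -conj(v₁),…,-conj(v_q), and its last entry is cosh t + (1/2)e^t(|u|² - |v|²) + e^t w, where |u|² = Σ_j |u_j|² and |v|² = Σ_j |v_j|². -/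
open scoped ComplexConjugate

/-- The matrix `N_{u,v,w}` over `ℂ`, written in block form with row/column blocks of
sizes `1, p, q, 1` (the index type `Fin 1 ⊕ Fin p ⊕ Fin q ⊕ Fin 1` has `p + q + 2` elements):
`N = [[-w, u, v, w], [-u*, 0, 0, u*], [v*, 0, 0, -v*], [-w, u, v, w]]`. -/
def Nmat {p q : ℕ} (u : Fin p → ℂ) (v : Fin q → ℂ) (w : ℂ) :
    Matrix (Fin 1 ⊕ Fin p ⊕ Fin q ⊕ Fin 1) (Fin 1 ⊕ Fin p ⊕ Fin q ⊕ Fin 1) ℂ :=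
  fun i j =>
    match i, j with
    | Sum.inl _, Sum.inl _ => -w
    | Sum.inl _, Sum.inr (Sum.inl j) => u j
    | Sum.inl _, Sum.inr (Sum.inr (Sum.inl j)) => v j
    | Sum.inl _, Sum.inr (Sum.inr (Sum.inr _)) => w
    | Sum.inr (Sum.inl i), Sum.inl _ => -(conj (u i))
    | Sum.inr (Sum.inl i), Sum.inr (Sum.inr (Sum.inr _)) => conj (u i)
    | Sum.inr (Sum.inl _), _ => 0
    | Sum.inr (Sum.inr (Sum.inl i)), Sum.inl _ => conj (v i)
    | Sum.inr (Sum.inr (Sum.inl i)), Sum.inr (Sum.inr (Sum.inr _)) => -(conj (v i))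
    | Sum.inr (Sum.inr (Sum.inl _)), _ => 0
    | Sum.inr (Sum.inr (Sum.inr _)), Sum.inl _ => -w
    | Sum.inr (Sum.inr (Sum.inr _)), Sum.inr (Sum.inl j) => u j
    | Sum.inr (Sum.inr (Sum.inr _)), Sum.inr (Sum.inr (Sum.inl j)) => v j
    | Sum.inr (Sum.inr (Sum.inr _)), Sum.inr (Sum.inr (Sum.inr _)) => w

/-- The matrix `X_t` (value `t` in the `(1, p+q+2)` and `(p+q+2, 1)` entries, `0` otherwise),
realized on the block index type `Fin 1 ⊕ Fin p ⊕ Fin q ⊕ Fin 1`. -/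
def Xmat (p q : ℕ) (t : ℝ) :
    Matrix (Fin 1 ⊕ Fin p ⊕ Fin q ⊕ Fin 1) (Fin 1 ⊕ Fin p ⊕ Fin q ⊕ Fin 1) ℂ :=
  fun i j =>
    match i, j with
    | Sum.inl _, Sum.inr (Sum.inr (Sum.inr _)) => (t : ℂ)
    | Sum.inr (Sum.inr (Sum.inr _)), Sum.inl _ => (t : ℂ)
    | _, _ => 0

/-- The vector `x₀ = (0, …, 0, 1)ᵀ`. -/
def xZero (p q : ℕ) : (Fin 1 ⊕ Fin p ⊕ Fin q ⊕ Fin 1) → ℂ :=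
  Sum.elim (fun _ => 0) (Sum.elim (fun _ => 0) (Sum.elim (fun _ => 0) fun _ => 1))

section Aux

open NormedSpace

variable {ι : Type*} [Fintype ι] [DecidableEq ι]

theorem exp_cube_zero' (A : Matrix ι ι ℂ) (h : A ^ 3 = 0) :
    exp A = 1 + A + (2⁻¹ : ℂ) • A ^ 2 := by
  letI : SeminormedRing (Matrix ι ι ℂ) := Matrix.linftyOpSemiNormedRing
  letI : NormedRing (Matrix ι ι ℂ) := Matrix.linftyOpNormedRing
  letI : NormedAlgebra ℂ (Matrix ι ι ℂ) := Matrix.linftyOpNormedAlgebra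
  rw [exp_eq_tsum ℂ]
  dsimp only
  rw [tsum_eq_sum (s := Finset.range 3) ?_]
  · simp [Finset.sum_range_succ]
  · intro n hn
    simp only [Finset.mem_range, not_lt] at hn
    obtain ⟨k, rfl⟩ := Nat.exists_eq_add_of_le hn
    rw [pow_add, h, zero_mul, smul_zero]

theorem exp_smul_idem' (c : ℂ) (P : Matrix ι ι ℂ) (h : P * P = P) :
    exp (c • P) = 1 + (Complex.exp c - 1) • P := by
  letI : SeminormedRing (Matrix ι ι ℂ) := Matrix.linftyOpSemiNormedRing
  letI : NormedRing (Matrix ι ι ℂ) := Matrix.linftyOpNormedRing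
  letI : NormedAlgebra ℂ (Matrix ι ι ℂ) := Matrix.linftyOpNormedAlgebra
  have hp : ∀ n : ℕ, P ^ (n + 1) = P := by
    intro n; induction n with
    | zero => simp
    | succ k ih => rw [pow_succ, ih, h]
  have hsum : Summable fun n : ℕ => ((n.factorial : ℂ))⁻¹ • (c • P) ^ n :=
    expSeries_summable' (𝕂 := ℂ) (c • P)
  rw [exp_eq_tsum ℂ]
  dsimp only
  rw [Summable.tsum_eq_zero_add hsum]
  have h2 : ∀ n : ℕ, ((Nat.factorial (n + 1) : ℂ))⁻¹ • (c • P) ^ (n + 1)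
      = (((Nat.factorial (n + 1) : ℂ))⁻¹ * c ^ (n + 1)) • P := by
    intro n
    rw [smul_pow, hp, smul_smul]
  simp only [h2, pow_zero, Nat.factorial_zero, Nat.cast_one, inv_one, one_smul]
  rw [Summable.tsum_smul_const ?_]
  · congr 2
    have he : Complex.exp c = ∑' n : ℕ, ((n.factorial : ℂ))⁻¹ • c ^ n := by
      rw [Complex.exp_eq_exp_ℂ, exp_eq_tsum ℂ]
    have hcs : Summable fun n : ℕ => ((n.factorial : ℂ))⁻¹ • c ^ n :=
      expSeries_summable' (𝕂 := ℂ) c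
    rw [he, Summable.tsum_eq_zero_add hcs]
    simp [smul_eq_mul]
  · have hcs : Summable fun n : ℕ => ((Nat.factorial (n + 1) : ℂ))⁻¹ • c ^ (n + 1) :=
      (expSeries_summable' (𝕂 := ℂ) c).comp_injective (add_left_injective 1)
    simpa [smul_eq_mul] using hcs

end Aux

section Mats

variable {p q : ℕ}

/-- `P₊` projection. -/
noncomputable def Pplus (p q : ℕ) :
    Matrix (Fin 1 ⊕ Fin p ⊕ Fin q ⊕ Fin 1) (Fin 1 ⊕ Fin p ⊕ Fin q ⊕ Fin 1) ℂ :=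
  fun i j =>
    match i, j with
    | Sum.inl _, Sum.inl _ => 2⁻¹
    | Sum.inl _, Sum.inr (Sum.inr (Sum.inr _)) => 2⁻¹
    | Sum.inr (Sum.inr (Sum.inr _)), Sum.inl _ => 2⁻¹
    | Sum.inr (Sum.inr (Sum.inr _)), Sum.inr (Sum.inr (Sum.inr _)) => 2⁻¹
    | _, _ => 0

/-- `P₋` projection. -/
noncomputable def Pminus (p q : ℕ) :
    Matrix (Fin 1 ⊕ Fin p ⊕ Fin q ⊕ Fin 1) (Fin 1 ⊕ Fin p ⊕ Fin q ⊕ Fin 1) ℂ :=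
  fun i j =>
    match i, j with
    | Sum.inl _, Sum.inl _ => 2⁻¹
    | Sum.inl _, Sum.inr (Sum.inr (Sum.inr _)) => -2⁻¹
    | Sum.inr (Sum.inr (Sum.inr _)), Sum.inl _ => -2⁻¹
    | Sum.inr (Sum.inr (Sum.inr _)), Sum.inr (Sum.inr (Sum.inr _)) => 2⁻¹
    | _, _ => 0

/-- corner matrix `N²`. -/
noncomputable def Cmat {p q : ℕ} (u : Fin p → ℂ) (v : Fin q → ℂ) :
    Matrix (Fin 1 ⊕ Fin p ⊕ Fin q ⊕ Fin 1) (Fin 1 ⊕ Fin p ⊕ Fin q ⊕ Fin 1) ℂ :=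
  fun i j =>
    match i, j with
    | Sum.inl _, Sum.inl _ => -((∑ j, u j * conj (u j)) - ∑ j, v j * conj (v j))
    | Sum.inl _, Sum.inr (Sum.inr (Sum.inr _)) => (∑ j, u j * conj (u j)) - ∑ j, v j * conj (v j)
    | Sum.inr (Sum.inr (Sum.inr _)), Sum.inl _ => -((∑ j, u j * conj (u j)) - ∑ j, v j * conj (v j))
    | Sum.inr (Sum.inr (Sum.inr _)), Sum.inr (Sum.inr (Sum.inr _)) =>
        (∑ j, u j * conj (u j)) - ∑ j, v j * conj (v j)
    | _, _ => 0

theorem Pplus_mul_Pplus : Pplus p q * Pplus p q = Pplus p q := by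
  ext i j
  rcases i with i | i | i | i <;> rcases j with j | j | j | j <;>
    simp [Matrix.mul_apply, Fintype.sum_sum_type, Pplus] <;> norm_num

theorem Pminus_mul_Pminus : Pminus p q * Pminus p q = Pminus p q := by
  ext i j
  rcases i with i | i | i | i <;> rcases j with j | j | j | j <;>
    simp [Matrix.mul_apply, Fintype.sum_sum_type, Pminus] <;> norm_num

theorem Pplus_mul_Pminus : Pplus p q * Pminus p q = 0 := by
  ext i j
  rcases i with i | i | i | i <;> rcases j with j | j | j | j <;>
    simp [Matrix.mul_apply, Fintype.sum_sum_type, Pplus, Pminus] <;> norm_num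

theorem Pminus_mul_Pplus : Pminus p q * Pplus p q = 0 := by
  ext i j
  rcases i with i | i | i | i <;> rcases j with j | j | j | j <;>
    simp [Matrix.mul_apply, Fintype.sum_sum_type, Pplus, Pminus] <;> norm_num

theorem Xmat_eq (t : ℝ) :
    Xmat p q t = (t : ℂ) • Pplus p q + (-(t : ℂ)) • Pminus p q := by
  ext i j
  rcases i with i | i | i | i <;> rcases j with j | j | j | j <;>
    simp [Xmat, Pplus, Pminus] <;> ring

theorem Nmat_sq (u : Fin p → ℂ) (v : Fin q → ℂ) (w : ℂ) :
    Nmat u v w * Nmat u v w = Cmat u v := by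
  ext i j
  rcases i with i | i | i | i <;> rcases j with j | j | j | j <;>
    simp [Matrix.mul_apply, Fintype.sum_sum_type, Nmat, Cmat, mul_neg, neg_mul,
      Finset.sum_neg_distrib] <;> ring

theorem Cmat_mul_Nmat (u : Fin p → ℂ) (v : Fin q → ℂ) (w : ℂ) :
    Cmat u v * Nmat u v w = 0 := by
  ext i j
  rcases i with i | i | i | i <;> rcases j with j | j | j | j <;>
    simp [Matrix.mul_apply, Fintype.sum_sum_type, Nmat, Cmat, mul_neg, neg_mul] <;> ring

theorem Nmat_cube (u : Fin p → ℂ) (v : Fin q → ℂ) (w : ℂ) :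
    Nmat u v w ^ 3 = 0 := by
  rw [pow_succ, pow_two, Nmat_sq, Cmat_mul_Nmat]

end Mats

/-- The vector `exp(X_t) · exp(N_{u,v,w}) · x₀` has first entry
`sinh t + (1/2)eᵗ(|u|² - |v|²) + eᵗ w`, its next `p` entries are `conj u₁, …, conj u_p`,
its next `q` entries are `-conj v₁, …, -conj v_q`, and its last entry is
`cosh t + (1/2)eᵗ(|u|² - |v|²) + eᵗ w`. -/
theorem exp_Xt_exp_N_mulVec_xZero (p q : ℕ) (hp : 0 ≤ p) (hq : 1 ≤ q)
    (u : Fin p → ℂ) (v : Fin q → ℂ) (w : ℂ) (hw : conj w = -w) (t : ℝ) :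
    (NormedSpace.exp (Xmat p q t) * NormedSpace.exp (Nmat u v w)).mulVec (xZero p q) =
      Sum.elim
        (fun _ => (Real.sinh t : ℂ) +
          (1 / 2 : ℂ) * Real.exp t * ((∑ j, ‖u j‖ ^ 2 : ℝ) - (∑ j, ‖v j‖ ^ 2 : ℝ)) +
          Real.exp t * w)
        (Sum.elim (fun j => conj (u j))
          (Sum.elim (fun j => -(conj (v j)))
            (fun _ => (Real.cosh t : ℂ) +
              (1 / 2 : ℂ) * Real.exp t * ((∑ j, ‖u j‖ ^ 2 : ℝ) - (∑ j, ‖v j‖ ^ 2 : ℝ)) +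
              Real.exp t * w))) := by
  have hX : NormedSpace.exp (Xmat p q t) =
      1 + (Complex.exp t - 1) • Pplus p q + (Complex.exp (-(t : ℂ)) - 1) • Pminus p q := by
    rw [Xmat_eq t, Matrix.exp_add_of_commute,
      exp_smul_idem' _ _ Pplus_mul_Pplus, exp_smul_idem' _ _ Pminus_mul_Pminus]
    · simp only [mul_add, add_mul, mul_one, one_mul, smul_mul_assoc, mul_smul_comm,
        Pplus_mul_Pminus, smul_zero, add_zero]
    · unfold Commute SemiconjBy
      simp only [smul_mul_assoc, mul_smul_comm, Pplus_mul_Pminus, Pminus_mul_Pplus,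
        smul_zero]
  have hN : NormedSpace.exp (Nmat u v w) =
      1 + Nmat u v w + (2⁻¹ : ℂ) • Cmat u v := by
    rw [exp_cube_zero' _ (Nmat_cube u v w), pow_two, Nmat_sq]
  have hcu : ((∑ j, ‖u j‖ ^ 2 : ℝ) : ℂ) = ∑ j, u j * conj (u j) := by
    push_cast
    refine Finset.sum_congr rfl fun j _ => ?_
    rw [Complex.mul_conj, Complex.normSq_eq_norm_sq]
    push_cast
    ring
  have hcv : ((∑ j, ‖v j‖ ^ 2 : ℝ) : ℂ) = ∑ j, v j * conj (v j) := by
    push_cast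
    refine Finset.sum_congr rfl fun j _ => ?_
    rw [Complex.mul_conj, Complex.normSq_eq_norm_sq]
    push_cast
    ring
  rw [← Matrix.mulVec_mulVec, hX, hN]
  funext i
  rcases i with i | i | i | i
  · obtain rfl : i = 0 := Subsingleton.elim i 0
    simp [Matrix.mulVec, dotProduct, Fintype.sum_sum_type, Matrix.add_apply,
      Matrix.smul_apply, Matrix.one_apply, Pplus, Pminus, Nmat, Cmat, xZero,
      Real.sinh_eq, Real.cosh_eq, Complex.ofReal_exp, Finset.mul_sum,
      Finset.sum_add_distrib, Fin.sum_univ_one, Complex.mul_conj, Complex.normSq_eq_norm_sq,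
      Finset.filter_eq', Finset.mem_singleton, Finset.card_singleton]
    have hfil : (Finset.filter (fun x => (0 : Fin 1) = x) ({0} : Finset (Fin 1))).card = 1 := rfl
    push_cast [Complex.ofReal_exp, hfil]
    ring
  · simp [Matrix.mulVec, dotProduct, Fintype.sum_sum_type, Matrix.add_apply,
      Matrix.smul_apply, Matrix.one_apply, Pplus, Pminus, Nmat, Cmat, xZero,
      Finset.mul_sum, Finset.sum_add_distrib, Fin.sum_univ_one]
  · simp [Matrix.mulVec, dotProduct, Fintype.sum_sum_type, Matrix.add_apply,
      Matrix.smul_apply, Matrix.one_apply, Pplus, Pminus, Nmat, Cmat, xZero,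
      Finset.mul_sum, Finset.sum_add_distrib, Fin.sum_univ_one]
  · obtain rfl : i = 0 := Subsingleton.elim i 0
    simp [Matrix.mulVec, dotProduct, Fintype.sum_sum_type, Matrix.add_apply,
      Matrix.smul_apply, Matrix.one_apply, Pplus, Pminus, Nmat, Cmat, xZero,
      Real.sinh_eq, Real.cosh_eq, Complex.ofReal_exp, Finset.mul_sum,
      Finset.sum_add_distrib, Fin.sum_univ_one, Complex.mul_conj, Complex.normSq_eq_norm_sq,
      Finset.filter_eq', Finset.mem_singleton, Finset.card_singleton]
    have hfil : (Finset.filter (fun x => (0 : Fin 1) = x) ({0} : Finset (Fin 1))).card = 1 := rfl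
    push_cast [Complex.ofReal_exp, hfil]
    ring
end

section
/- Let p ≥ 0 and q ≥ 1 be integers and n = p+q+2, and let J = diag(I_{p+1}, -I_{q+1}). For every row vector u ∈ ℂ^p, every row vector v ∈ ℂ^q, every w ∈ ℂ with conj(w) = -w, and every t ∈ ℝ, the matrix g = exp(X_t)·exp(N_{u,v,w}) satisfies gᴴ J g = J; that is, g preserves the Hermitian form of signature (p+1, q+1) on ℂ^n. -/
open Matrix
open scoped ComplexConjugate

/-- The diagonal matrix `J = diag(I_{p+1}, -I_{q+1})`, the Gram matrix of the Hermitian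
form of signature `(p+1, q+1)` on `ℂ^{p+q+2}`. -/
def Jmat (p q : ℕ) :
    Matrix (Fin 1 ⊕ Fin p ⊕ Fin q ⊕ Fin 1) (Fin 1 ⊕ Fin p ⊕ Fin q ⊕ Fin 1) ℂ :=
  Matrix.diagonal
    (Sum.elim (fun _ => 1) (Sum.elim (fun _ => 1) (Sum.elim (fun _ => -1) fun _ => -1)))

lemma exp_preserves_form_of_skew {n : Type*} [Fintype n] [DecidableEq n]
    (A J : Matrix n n ℂ) (hJ : J * J = 1) (h : Aᴴ * J = -(J * A)) :
    (NormedSpace.exp A)ᴴ * J * NormedSpace.exp A = J := by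
  have hAH : Aᴴ = J * -A * J := by
    calc Aᴴ = Aᴴ * (J * J) := by rw [hJ, mul_one]
    _ = Aᴴ * J * J := by rw [mul_assoc]
    _ = -(J * A) * J := by rw [h]
    _ = J * -A * J := by noncomm_ring
  let U : (Matrix n n ℂ)ˣ := ⟨J, J, hJ, hJ⟩
  have hexpAH : NormedSpace.exp Aᴴ = J * NormedSpace.exp (-A) * J := by
    have := Matrix.exp_units_conj U (-A)
    have hU1 : (U : Matrix n n ℂ) = J := rfl
    have hU2 : ((U⁻¹ : (Matrix n n ℂ)ˣ) : Matrix n n ℂ) = J := rfl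
    rw [hU1, hU2] at this
    rw [hAH, this]
  have hmul : NormedSpace.exp (-A) * NormedSpace.exp A = 1 := by
    rw [← Matrix.exp_add_of_commute (-A) A (Commute.refl A).neg_left,
      neg_add_cancel, NormedSpace.exp_zero]
  rw [← Matrix.exp_conjTranspose, hexpAH]
  calc J * NormedSpace.exp (-A) * J * J * NormedSpace.exp A
      = J * NormedSpace.exp (-A) * (J * J) * NormedSpace.exp A := by noncomm_ring
    _ = J * (NormedSpace.exp (-A) * NormedSpace.exp A) := by rw [hJ]; noncomm_ring
    _ = J := by rw [hmul, mul_one]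

lemma Jmat_sq (p q : ℕ) : Jmat p q * Jmat p q = 1 := by
  ext i j
  rw [Jmat, Matrix.diagonal_mul_diagonal]
  rcases i with i | i | i | i <;> rcases j with j | j | j | j <;>
    simp [Matrix.diagonal, Matrix.one_apply, Sum.elim] <;> aesop

lemma Xmat_skew (p q : ℕ) (t : ℝ) :
    (Xmat p q t)ᴴ * Jmat p q = -(Jmat p q * Xmat p q t) := by
  ext i j
  rw [Jmat, Matrix.mul_diagonal, Matrix.neg_apply, Matrix.diagonal_mul]
  rcases i with i | i | i | i <;> rcases j with j | j | j | j <;>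
    simp [Xmat, Matrix.conjTranspose_apply] <;> ring

lemma Nmat_skew {p q : ℕ} (u : Fin p → ℂ) (v : Fin q → ℂ) (w : ℂ) (hw : conj w = -w) :
    (Nmat u v w)ᴴ * Jmat p q = -(Jmat p q * Nmat u v w) := by
  ext i j
  rw [Jmat, Matrix.mul_diagonal, Matrix.neg_apply, Matrix.diagonal_mul]
  rcases i with i | i | i | i <;> rcases j with j | j | j | j <;>
    simp [Nmat, Matrix.conjTranspose_apply, hw] <;> ring

/-- For every row vector `u ∈ ℂ^p`, every row vector `v ∈ ℂ^q`, every `w ∈ ℂ` with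
`conj w = -w` and every `t ∈ ℝ`, the matrix `g = exp(X_t) · exp(N_{u,v,w})` satisfies
`gᴴ J g = J`; that is, `g` preserves the Hermitian form of signature `(p+1, q+1)`. -/
theorem exp_Xt_exp_N_preserves_form (p q : ℕ) (hp : 0 ≤ p) (hq : 1 ≤ q)
    (u : Fin p → ℂ) (v : Fin q → ℂ) (w : ℂ) (hw : conj w = -w) (t : ℝ) :
    (NormedSpace.exp (Xmat p q t) * NormedSpace.exp (Nmat u v w))ᴴ * Jmat p q *
        (NormedSpace.exp (Xmat p q t) * NormedSpace.exp (Nmat u v w)) =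
      Jmat p q := by
  have hX := exp_preserves_form_of_skew (Xmat p q t) (Jmat p q) (Jmat_sq p q)
    (Xmat_skew p q t)
  have hN := exp_preserves_form_of_skew (Nmat u v w) (Jmat p q) (Jmat_sq p q)
    (Nmat_skew u v w hw)
  rw [Matrix.conjTranspose_mul]
  calc (NormedSpace.exp (Nmat u v w))ᴴ * (NormedSpace.exp (Xmat p q t))ᴴ * Jmat p q *
        (NormedSpace.exp (Xmat p q t) * NormedSpace.exp (Nmat u v w))
      = (NormedSpace.exp (Nmat u v w))ᴴ *
          ((NormedSpace.exp (Xmat p q t))ᴴ * Jmat p q * NormedSpace.exp (Xmat p q t)) *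
          NormedSpace.exp (Nmat u v w) := by noncomm_ring
    _ = (NormedSpace.exp (Nmat u v w))ᴴ * Jmat p q * NormedSpace.exp (Nmat u v w) := by
        rw [hX]
    _ = Jmat p q := hN
end
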